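/- Let h and k be coprime positive integers with h + k odd. Then B₁(h,k) = ((1-h)/(2k))·Σ_{j=1}^{k} tan(πh(2j-1)/(2k))·cot(π(2j-1)/(2k)), where any term whose cotangent factor vanishes (i.e. 2j-1 = k) is interpreted as 0. -/

import Mathlib

open Filter Finset Real

/-- `B₁(h,k) = Σ_{j=1}^{k-1} (-1)^{j+⌊hj/k⌋}·⌊hj/k⌋` (as a real number). -/
noncomputable def B1 (h k : ℤ) : ℝ :=
  ∑ j ∈ Finset.Icc (1 : ℤ) (k - 1),
    (-1 : ℝ) ^ (j + ⌊((h * j : ℤ) : ℝ) / (k : ℝ)⌋) * (⌊((h * j : ℤ) : ℝ) / (k : ℝ)⌋ : ℝ)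



lemma geom_deriv_aux (z : ℂ) : ∀ N : ℕ,
    (z - 1) * ∑ a ∈ range N, (a : ℂ) * z ^ a
      = ((N : ℂ) - 1) * z ^ N - (∑ a ∈ range N, z ^ a) + 1 := by
  intro N
  induction N with
  | zero => simp
  | succ n ih =>
    rw [Finset.sum_range_succ, Finset.sum_range_succ (f := fun a => z ^ a), mul_add, ih]
    push_cast
    ring

lemma geom_deriv (z : ℂ) (N : ℕ) (h1 : z ^ N = 1) (h2 : z ≠ 1) :
    (z - 1) * ∑ a ∈ range N, (a : ℂ) * z ^ a = N := by
  have hg : ∑ a ∈ range N, z ^ a = 0 := by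
    have := geom_sum_eq h2 N
    rw [this, h1]; simp
  rw [geom_deriv_aux, h1, hg]; ring

lemma cot_sum (k : ℕ) (hk : 0 < k) (n : ℤ) (hn : ¬ ((2*(k:ℤ)) ∣ n)) :
    ∑ a ∈ range (2*k), (a:ℝ) * Real.sin (π * a * n / k)
      = -(k:ℝ) * Real.cot (π * n / (2*k)) := by
  have hkR : (k:ℝ) ≠ 0 := Nat.cast_ne_zero.mpr hk.ne'
  have h2k : (2*(k:ℝ)) ≠ 0 := by positivity
  set θ : ℝ := π * n / (2*k) with hθ
  have hsin : Real.sin θ ≠ 0 := by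
    rw [ne_eq, Real.sin_eq_zero_iff]
    rintro ⟨m, hm⟩
    apply hn
    refine ⟨m, ?_⟩
    rw [hθ, eq_div_iff h2k] at hm
    have h3 : π * ((2*(k:ℝ)*m)) = π * n := by linear_combination hm
    have h4 : (2*(k:ℝ)*m) = n := mul_left_cancel₀ Real.pi_ne_zero h3
    exact_mod_cast h4.symm
  set z : ℂ := Complex.exp ((2*θ : ℝ) * Complex.I) with hz
  have hzpow : ∀ a : ℕ, z ^ a = Complex.exp ((2*a*θ : ℝ) * Complex.I) := by
    intro a
    rw [hz, ← Complex.exp_nat_mul]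
    congr 1
    push_cast
    ring
  have hzN : z ^ (2*k) = 1 := by
    rw [hzpow]
    have harg : (2 * ((2*k:ℕ):ℝ) * θ) = (n:ℝ) * (2*π) := by
      rw [hθ]; push_cast; field_simp
    rw [harg]
    have : (((n:ℝ) * (2*π) : ℝ) : ℂ) * Complex.I = (n:ℂ) * (2 * π * Complex.I) := by
      push_cast; ring
    rw [this]
    simpa [mul_comm, mul_left_comm, mul_assoc] using Complex.exp_int_mul_two_pi_mul_I n
  have hz1 : z ≠ 1 := by
    rw [hz, ne_eq, Complex.exp_eq_one_iff]
    rintro ⟨m, hm⟩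
    have hI : ((2*θ:ℝ):ℂ) = (m:ℂ) * (2*π) := by
      apply mul_right_cancel₀ Complex.I_ne_zero
      rw [hm]; ring
    have hR : (2*θ:ℝ) = m * (2*π) := by exact_mod_cast hI
    apply hn
    refine ⟨m, ?_⟩
    rw [hθ] at hR
    have h0 : π * n / (2*k) = (m:ℝ) * π := by linarith
    rw [div_eq_iff h2k] at h0
    have h3 : π * ((2*(k:ℝ)*m)) = π * n := by linear_combination -h0
    have h4 : (2*(k:ℝ)*m) = n := mul_left_cancel₀ Real.pi_ne_zero h3
    exact_mod_cast h4.symm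
  have hzsub : z - 1 ≠ 0 := sub_ne_zero.mpr hz1
  have hsum : ∑ a ∈ range (2*k), (a:ℂ) * z ^ a = ((2*k : ℕ):ℂ) / (z - 1) := by
    rw [eq_div_iff hzsub, mul_comm]
    exact geom_deriv z (2*k) hzN hz1
  have him : ∑ a ∈ range (2*k), (a:ℝ) * Real.sin (π * a * n / k)
      = (((2*k:ℕ):ℂ) / (z - 1)).im := by
    rw [← hsum, Complex.im_sum]
    apply Finset.sum_congr rfl
    intro a _
    have h1 : ((a:ℂ) * z ^ a).im = a * (z ^ a).im := by
      simp [Complex.mul_im]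
    rw [h1, hzpow, Complex.exp_ofReal_mul_I_im]
    congr 1
    rw [hθ]; field_simp
  rw [him]
  have hre : (z - 1).re = Real.cos (2*θ) - 1 := by
    rw [hz, Complex.sub_re, Complex.one_re, Complex.exp_ofReal_mul_I_re]
  have him2 : (z - 1).im = Real.sin (2*θ) := by
    rw [hz, Complex.sub_im, Complex.one_im, Complex.exp_ofReal_mul_I_im, sub_zero]
  have hns : Complex.normSq (z - 1) = (Real.cos (2*θ) - 1)^2 + (Real.sin (2*θ))^2 := by
    rw [Complex.normSq_apply, hre, him2]; ring
  have hpyth := Real.sin_sq_add_cos_sq θ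
  have hD : (Real.cos (2*θ) - 1)^2 + (Real.sin (2*θ))^2 = 4 * Real.sin θ^2 := by
    rw [Real.cos_two_mul', Real.sin_two_mul]
    linear_combination (Real.sin θ^2 + Real.cos θ^2 - 1) * hpyth
  rw [Complex.div_im, hre, him2, hns]
  simp only [Complex.natCast_re, Complex.natCast_im]
  rw [hD, Real.sin_two_mul, Real.cot_eq_cos_div_sin]
  push_cast
  field_simp
  ring


lemma cot_shift (x : ℝ) : Real.cot (x + π/2) = - Real.tan x := by
  rw [Real.cot_eq_cos_div_sin, Real.cos_add_pi_div_two, Real.sin_add_pi_div_two,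
    Real.tan_eq_sin_div_cos, neg_div]

lemma tan_sum (k : ℕ) (hk : 0 < k) (m : ℤ) (hm : ¬ ((2*(k:ℤ)) ∣ (m + k))) :
    (k:ℝ) * Real.tan (π * m / (2*k))
      = ∑ a ∈ range (2*k), (a:ℝ) * (-1:ℝ)^a * Real.sin (π * a * m / k) := by
  have hkR : (k:ℝ) ≠ 0 := Nat.cast_ne_zero.mpr hk.ne'
  have h := cot_sum k hk (m+k) hm
  have harg : π * ((m+k : ℤ):ℝ) / (2*k) = π * m / (2*k) + π/2 := by
    push_cast; field_simp
  rw [harg, cot_shift] at h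
  have hterm : ∀ a ∈ range (2*k),
      (a:ℝ) * Real.sin (π * a * ((m+k:ℤ):ℝ) / k)
        = (a:ℝ) * (-1:ℝ)^a * Real.sin (π * a * (m:ℝ) / k) := by
    intro a _
    have harg2 : π * a * ((m+k:ℤ):ℝ) / k = π * a * (m:ℝ) / k + a * π := by
      push_cast; field_simp
    rw [harg2, Real.sin_add_nat_mul_pi]
    ring
  rw [Finset.sum_congr rfl hterm] at h
  rw [h]; ring

lemma kernel_aux (x : ℝ) : ∀ m : ℕ,
    Real.sin (2*m*x) * Real.cos x
      = Real.sin x * (Real.cos (2*m*x) - 1)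
        + 2 * ∑ t ∈ range m, Real.sin x * Real.cos (2*t*x) := by
  intro m
  induction m with
  | zero => simp
  | succ n ih =>
    rw [Finset.sum_range_succ]
    push_cast
    rw [show 2*((n:ℝ)+1)*x = 2*(n:ℝ)*x + 2*x by ring, Real.sin_add, Real.cos_add,
      Real.sin_two_mul, Real.cos_two_mul]
    linear_combination ih + 2*Real.sin (2*(n:ℝ)*x)*Real.cos x * (Real.sin_sq_add_cos_sq x)

lemma kernel (x : ℝ) (hx : Real.sin x ≠ 0) (m : ℕ) :
    Real.sin (2*m*x) * Real.cot x
      = (Real.cos (2*m*x) - 1) + 2 * ∑ t ∈ range m, Real.cos (2*t*x) := by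
  rw [Real.cot_eq_cos_div_sin]
  rw [mul_div_assoc'] -- (sin(2mx)*cos x)/sin x
  rw [div_eq_iff hx, kernel_aux x m]
  have hs : ∑ t ∈ range m, Real.sin x * Real.cos (2*t*x)
      = (∑ t ∈ range m, Real.cos (2*t*x)) * Real.sin x := by
    rw [Finset.sum_mul]; exact Finset.sum_congr rfl (fun t _ => by ring)
  rw [hs]; ring


lemma neg_one_zpow_congr {a b : ℤ} (h : Even (a - b)) : ((-1:ℝ))^a = (-1)^b := by
  obtain ⟨c, hc⟩ := h
  have : a = b + 2*c := by omega
  rw [this, zpow_add₀ (by norm_num : (-1:ℝ) ≠ 0), zpow_mul]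
  norm_num

lemma ortho (k : ℕ) (hk : 0 < k) (c : ℤ) :
    ∑ j ∈ range k, Real.cos (π * c * (2*j+1) / k)
      = if (k:ℤ) ∣ c then (k:ℝ) * (-1:ℝ)^(c / (k:ℤ)) else 0 := by
  have hkR : (k:ℝ) ≠ 0 := Nat.cast_ne_zero.mpr hk.ne'
  by_cases hdvd : (k:ℤ) ∣ c
  · rw [if_pos hdvd]
    obtain ⟨s, rfl⟩ := hdvd
    have hterm : ∀ j ∈ range k,
        Real.cos (π * ((k:ℤ)*s : ℤ) * (2*j+1) / k) = (-1:ℝ)^s := by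
      intro j _
      have harg : π * (((k:ℤ)*s : ℤ):ℝ) * (2*j+1) / k = 0 + (s*(2*(j:ℤ)+1) : ℤ) * π := by
        push_cast; field_simp; ring
      rw [harg, Real.cos_add_int_mul_pi, Real.cos_zero, mul_one]
      exact neg_one_zpow_congr ⟨s*j, by ring⟩
    rw [Finset.sum_congr rfl hterm, Finset.sum_const, Finset.card_range, nsmul_eq_mul]
    congr 2
    rw [Int.mul_ediv_cancel_left _ (by exact_mod_cast hk.ne' : (k:ℤ) ≠ 0)]
  · rw [if_neg hdvd]
    set w : ℂ := Complex.exp (((π * c / k : ℝ) : ℂ) * Complex.I) with hw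
    have hwpow : ∀ n : ℕ, w ^ n = Complex.exp (((π * c * n / k : ℝ) : ℂ) * Complex.I) := by
      intro n
      rw [hw, ← Complex.exp_nat_mul]
      congr 1
      push_cast; field_simp
    have hterm : ∀ j ∈ range k,
        Real.cos (π * c * (2*j+1) / k) = (w ^ (2*j+1)).re := by
      intro j _
      rw [hwpow, Complex.exp_ofReal_mul_I_re]
      congr 1
      push_cast; ring
    rw [Finset.sum_congr rfl hterm, ← Complex.re_sum]
    have hw2 : ∀ j : ℕ, w ^ (2*j+1) = w * (w^2)^j := by
      intro j; rw [← pow_mul]; ring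
    have hsum : ∑ j ∈ range k, w ^ (2*j+1) = w * ∑ j ∈ range k, (w^2)^j := by
      rw [Finset.mul_sum]; exact Finset.sum_congr rfl (fun j _ => hw2 j)
    have hw2k : (w^2)^k = 1 := by
      rw [← pow_mul, hwpow]
      have : (π * (c:ℝ) * ((2*k:ℕ):ℝ) / k : ℝ) = (c:ℝ) * (2*π) := by
        push_cast; field_simp
      rw [this]
      have h2 : (((c:ℝ) * (2*π) : ℝ):ℂ) * Complex.I = (c:ℂ) * (2*π*Complex.I) := by
        push_cast; ring
      rw [h2]
      simpa [mul_comm, mul_left_comm, mul_assoc] using Complex.exp_int_mul_two_pi_mul_I c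
    have hw2ne : w^2 ≠ 1 := by
      rw [hwpow 2, ne_eq, Complex.exp_eq_one_iff]
      rintro ⟨m, hm⟩
      have hI := mul_right_cancel₀ Complex.I_ne_zero
        (hm.trans (by push_cast; ring : (m:ℂ) * (2*(π:ℂ)*Complex.I) = (((m:ℝ)*(2*π) : ℝ):ℂ) * Complex.I))
      have hR : (π * (c:ℝ) * ((2:ℕ):ℝ) / k : ℝ) = (m:ℝ) * (2*π) := by exact_mod_cast hI
      push_cast at hR
      apply hdvd
      refine ⟨m, ?_⟩
      rw [div_eq_iff hkR] at hR
      have h3 : π * ((k:ℝ)*m) = π * c := by linear_combination -hR/2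
      have h4 : ((k:ℝ)*m) = c := mul_left_cancel₀ Real.pi_ne_zero h3
      exact_mod_cast h4.symm
    have hgeom : ∑ j ∈ range k, (w^2)^j = 0 := by
      have := geom_sum_eq hw2ne k
      rw [this, hw2k]; simp
    rw [hsum, hgeom, mul_zero, Complex.zero_re]


lemma ediv_sub_one_not_dvd {k n : ℤ} (hk : 0 < k) (h : ¬ k ∣ n) : (n-1)/k = n/k := by
  have h0 := Int.emod_add_mul_ediv n k
  have h1 : 0 ≤ n % k := Int.emod_nonneg n hk.ne'
  have h2 : n % k < k := Int.emod_lt_of_pos n hk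
  have h3 : n % k ≠ 0 := fun hc => h (Int.dvd_of_emod_eq_zero hc)
  rw [show n - 1 = (n % k - 1) + (n/k) * k by linarith [h0],
    Int.add_mul_ediv_right _ _ hk.ne',
    Int.ediv_eq_zero_of_lt (by omega) (by omega), zero_add]

lemma ediv_sub_one_dvd {k n : ℤ} (hk : 0 < k) (h : k ∣ n) : (n-1)/k = n/k - 1 := by
  obtain ⟨q, rfl⟩ := h
  rw [show k*q - 1 = (k-1) + (q-1)*k by ring, Int.add_mul_ediv_right _ _ hk.ne',
    Int.ediv_eq_zero_of_lt (by omega) (by omega), Int.mul_ediv_cancel_left _ hk.ne']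
  ring

lemma ediv_neg_not_dvd {k n : ℤ} (hk : 0 < k) (h : ¬ k ∣ n) : (-n)/k = -(n/k) - 1 := by
  have h0 := Int.emod_add_mul_ediv n k
  have h1 : 0 ≤ n % k := Int.emod_nonneg n hk.ne'
  have h2 : n % k < k := Int.emod_lt_of_pos n hk
  have h3 : n % k ≠ 0 := fun hc => h (Int.dvd_of_emod_eq_zero hc)
  rw [show -n = (k - n % k) + (-(n/k) - 1) * k by linarith [h0],
    Int.add_mul_ediv_right _ _ hk.ne',
    Int.ediv_eq_zero_of_lt (by omega) (by omega), zero_add]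

lemma floor_int_div (a b : ℤ) (hb : 0 < b) : ⌊((a:ℝ))/((b:ℝ))⌋ = a / b := by
  have hb' : ((b.toNat : ℕ) : ℤ) = b := Int.toNat_of_nonneg hb.le
  have : (a:ℝ)/(b:ℝ) = (((a:ℚ)/(b:ℚ) : ℚ) : ℝ) := by push_cast; ring
  rw [this, Rat.floor_cast, show ((b:ℚ)) = ((b.toNat:ℕ):ℚ) by exact_mod_cast hb'.symm,
    Rat.floor_intCast_div_natCast]
  rw [show ((b.toNat:ℕ):ℤ) = b from hb']

lemma neg_one_zpow_congr' {a b : ℤ} (h : Even (a - b)) : ((-1:ℝ))^a = (-1)^b := by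
  obtain ⟨c, hc⟩ := h
  have : a = b + 2*c := by omega
  rw [this, zpow_add₀ (by norm_num : (-1:ℝ) ≠ 0), zpow_mul]
  norm_num

lemma Dsum (k : ℕ) (hk : 0 < k) : ∀ M : ℕ, 1 ≤ M →
    ∑ t ∈ range M, (if (k:ℤ) ∣ (t:ℤ) then (k:ℝ) * (-1:ℝ)^((t:ℤ)/(k:ℤ)) else 0)
      = (k:ℝ) * ((-1:ℝ)^(((M:ℤ)-1)/(k:ℤ)) + 1) / 2 := by
  have hkZ : (0:ℤ) < k := by exact_mod_cast hk
  intro M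
  induction M with
  | zero => omega
  | succ n ih =>
    intro _
    by_cases hn : 1 ≤ n
    · rw [Finset.sum_range_succ, ih hn]
      by_cases hdvd : (k:ℤ) ∣ (n:ℤ)
      · rw [if_pos hdvd]
        have e1 : ((n:ℤ)-1)/(k:ℤ) = (n:ℤ)/(k:ℤ) - 1 := ediv_sub_one_dvd hkZ hdvd
        have e2 : (((n:ℕ)+1:ℤ)-1)/(k:ℤ) = (n:ℤ)/(k:ℤ) := by norm_num
        push_cast
        rw [e1, show ((n:ℤ)+1-1)/(k:ℤ) = (n:ℤ)/(k:ℤ) by norm_num]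
        rw [zpow_sub₀ (by norm_num : (-1:ℝ) ≠ 0)]
        norm_num
        ring
      · rw [if_neg hdvd]
        have e1 : ((n:ℤ)-1)/(k:ℤ) = (n:ℤ)/(k:ℤ) := ediv_sub_one_not_dvd hkZ hdvd
        push_cast
        rw [show ((n:ℤ)+1-1)/(k:ℤ) = (n:ℤ)/(k:ℤ) by norm_num, ← e1]
        ring
    · have hn0 : n = 0 := by omega
      subst hn0
      norm_num


lemma inner_sum2 (k : ℕ) (hk : 0 < k) (m : ℕ) (hm : 1 ≤ m) :
    ∑ j ∈ range k, Real.sin (π * m * (2*j+1) / k) * Real.cot (π * (2*j+1) / (2*k))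
      = (if (k:ℤ) ∣ (m:ℤ) then (k:ℝ) * (-1:ℝ)^((m:ℤ)/(k:ℤ)) else 0)
        + (k:ℝ) * (-1:ℝ)^(((m:ℤ)-1)/(k:ℤ)) := by
  have hkR : (k:ℝ) ≠ 0 := Nat.cast_ne_zero.mpr hk.ne'
  have hkR' : (0:ℝ) < k := by exact_mod_cast hk
  have hterm : ∀ j ∈ range k,
      Real.sin (π * m * (2*j+1) / k) * Real.cot (π * (2*j+1) / (2*k))
        = (Real.cos (π * m * (2*j+1) / k) - 1)
          + 2 * ∑ t ∈ range m, Real.cos (π * t * (2*j+1) / k) := by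
    intro j hj
    have hjk : (j:ℝ) < k := by exact_mod_cast mem_range.mp hj
    have hx0 : 0 < π * (2*(j:ℝ)+1) / (2*k) := by positivity
    have hxπ : π * (2*(j:ℝ)+1) / (2*k) < π := by
      rw [div_lt_iff₀ (by positivity)]
      have hj1 : (j:ℝ) + 1 ≤ k := by exact_mod_cast mem_range.mp hj
      nlinarith [mul_pos pi_pos (by linarith : (0:ℝ) < 2*(k:ℝ) - 2*(j:ℝ) - 1)]
    have hsx : Real.sin (π * (2*(j:ℝ)+1) / (2*k)) ≠ 0 :=
      ne_of_gt (Real.sin_pos_of_pos_of_lt_pi hx0 hxπ)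
    have hker := kernel (π * (2*(j:ℝ)+1) / (2*k)) hsx m
    have h2mx : 2*(m:ℝ)*(π * (2*(j:ℝ)+1) / (2*k)) = π * m * (2*j+1) / k := by
      field_simp
    rw [h2mx] at hker
    have hts : ∀ t ∈ range m, Real.cos (2*(t:ℝ)*(π * (2*(j:ℝ)+1) / (2*k)))
        = Real.cos (π * t * (2*j+1) / k) := by
      intro t _
      congr 1
      field_simp
    rw [hker, Finset.sum_congr rfl hts]
  rw [Finset.sum_congr rfl hterm]
  rw [Finset.sum_add_distrib, Finset.sum_sub_distrib, Finset.sum_const, Finset.card_range]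
  have h1 : ∑ j ∈ range k, Real.cos (π * m * (2*j+1) / k)
      = if (k:ℤ) ∣ (m:ℤ) then (k:ℝ) * (-1:ℝ)^((m:ℤ)/(k:ℤ)) else 0 := by
    rw [← ortho k hk (m:ℤ)]
    apply Finset.sum_congr rfl
    intro j _
    congr 2
    all_goals push_cast; try ring
  have h2 : ∑ j ∈ range k, 2 * ∑ t ∈ range m, Real.cos (π * t * (2*j+1) / k)
      = (k:ℝ) * ((-1:ℝ)^(((m:ℤ)-1)/(k:ℤ)) + 1) := by
    rw [← Finset.mul_sum, Finset.sum_comm]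
    have h3 : ∀ t ∈ range m, ∑ j ∈ range k, Real.cos (π * t * (2*j+1) / k)
        = if (k:ℤ) ∣ (t:ℤ) then (k:ℝ) * (-1:ℝ)^((t:ℤ)/(k:ℤ)) else 0 := by
      intro t _
      rw [← ortho k hk (t:ℤ)]
      apply Finset.sum_congr rfl
      intro j _
      congr 2
      all_goals push_cast; try ring
    rw [Finset.sum_congr rfl h3, Dsum k hk m hm]
    ring
  rw [h1, h2, nsmul_eq_mul]
  ring


lemma neg_one_npow_zpow (a : ℕ) (b : ℤ) :
    ((-1:ℝ))^a * (-1:ℝ)^b = (-1:ℝ)^((a:ℤ)+b) := by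
  rw [← zpow_natCast (-1:ℝ) a, ← zpow_add₀ (by norm_num : (-1:ℝ) ≠ 0)]

lemma Ssum (h : ℤ) (hh : 0 < h) (K : ℕ) (hK : 0 < K)
    (hco : IsCoprime h (K:ℤ)) (hodd : Odd (h + K)) :
    ∑ i ∈ range K,
        Real.tan (π * h * (2*(i:ℝ)+1) / (2*K)) * Real.cot (π * (2*(i:ℝ)+1) / (2*K))
      = -(K:ℝ) * ∑ a ∈ Finset.Ico 1 K, (-1:ℝ)^((a:ℤ) + (h*a)/(K:ℤ)) := by
  have hKZ : (0:ℤ) < (K:ℤ) := by exact_mod_cast hK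
  have hKZne : ((K:ℤ)) ≠ 0 := hKZ.ne'
  have hKR : ((K:ℕ):ℝ) ≠ 0 := Nat.cast_ne_zero.mpr hK.ne'
  set H : ℕ := h.toNat with hHdef
  have hH : ((H:ℕ):ℤ) = h := Int.toNat_of_nonneg hh.le
  have hoddKH : Odd ((K:ℤ) + H) := by rw [hH]; rwa [add_comm] at hodd
  have hHR : ((H:ℕ):ℝ) = (h:ℝ) := by exact_mod_cast congrArg (Int.cast : ℤ → ℝ) hH
  have hdvd_b : ∀ b : ℕ, ((K:ℤ) ∣ ((b*H:ℕ):ℤ)) → (K ∣ b) := by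
    intro b hb
    have h2 : (K:ℤ) ∣ (b:ℤ) * h := by push_cast at hb; rwa [hH] at hb
    have h3 : (K:ℤ) ∣ (b:ℤ) := (hco.symm).dvd_of_dvd_mul_right h2
    exact_mod_cast h3
  -- step 1: multiply by K and expand tan
  have hstep1 : (K:ℝ) * ∑ i ∈ range K,
      Real.tan (π * h * (2*(i:ℝ)+1) / (2*K)) * Real.cot (π * (2*(i:ℝ)+1) / (2*K))
      = ∑ a ∈ range (2*K), ((a:ℝ) * (-1:ℝ)^a) *
          ∑ i ∈ range K,
            Real.sin (π * (a*H : ℕ) * (2*(i:ℝ)+1) / K) * Real.cot (π * (2*(i:ℝ)+1) / (2*K)) := by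
    rw [Finset.mul_sum]
    have h1 : ∀ i ∈ range K,
        (K:ℝ) * (Real.tan (π * h * (2*(i:ℝ)+1) / (2*K)) * Real.cot (π * (2*(i:ℝ)+1) / (2*K)))
          = ∑ a ∈ range (2*K),
              ((a:ℝ) * (-1:ℝ)^a) * (Real.sin (π * (a*H : ℕ) * (2*(i:ℝ)+1) / K)
                * Real.cot (π * (2*(i:ℝ)+1) / (2*K))) := by
      intro i _
      have hoddm : Odd (h*(2*(i:ℤ)+1) + K) := by
        have : h*(2*(i:ℤ)+1) + K = (h + K) + 2*(h*i) := by ring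
        rw [this]
        exact hodd.add_even (even_two_mul _)
      have hm : ¬ ((2*(K:ℤ)) ∣ (h*(2*(i:ℤ)+1) + K)) := by
        intro hdvd
        have h2 : (2:ℤ) ∣ (h*(2*(i:ℤ)+1) + K) := dvd_trans ⟨K, rfl⟩ hdvd
        exact (Int.not_odd_iff_even.mpr (even_iff_two_dvd.mpr h2)) hoddm
      have ht := tan_sum K hK (h*(2*(i:ℤ)+1)) hm
      have hang : π * ((h*(2*(i:ℤ)+1) : ℤ):ℝ) / (2*(K:ℝ)) = π * h * (2*(i:ℝ)+1) / (2*(K:ℝ)) := by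
        push_cast; ring
      rw [hang] at ht
      rw [← mul_assoc, ht, Finset.sum_mul]
      apply Finset.sum_congr rfl
      intro a _
      have hang2 : π * (a:ℝ) * ((h*(2*(i:ℤ)+1) : ℤ):ℝ) / (K:ℝ)
          = π * ((a*H : ℕ):ℝ) * (2*(i:ℝ)+1) / (K:ℝ) := by
        push_cast [hHR]
        ring
      rw [hang2, mul_assoc]
    rw [Finset.sum_congr rfl h1, Finset.sum_comm]
    apply Finset.sum_congr rfl
    intro a _
    rw [← Finset.mul_sum]
  -- step 2: evaluate inner sums
  have hstep2 : ∀ a ∈ range (2*K),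
      ((a:ℝ) * (-1:ℝ)^a) *
          ∑ i ∈ range K,
            Real.sin (π * (a*H : ℕ) * (2*(i:ℝ)+1) / K) * Real.cot (π * (2*(i:ℝ)+1) / (2*K))
        = ((a:ℝ) * (-1:ℝ)^a) * (if (K:ℤ) ∣ ((a*H:ℕ):ℤ) then (K:ℝ) * (-1:ℝ)^(((a*H:ℕ):ℤ)/(K:ℤ)) else 0)
          + ((a:ℝ) * (-1:ℝ)^a) * ((K:ℝ) * (-1:ℝ)^((((a*H:ℕ):ℤ)-1)/(K:ℤ))) := by
    intro a ha
    rcases Nat.eq_zero_or_pos a with rfl | hapos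
    · norm_num
    · have hm1 : 1 ≤ a*H := by
        have : 0 < H := by omega
        exact Nat.one_le_iff_ne_zero.mpr (Nat.mul_ne_zero hapos.ne' this.ne')
      rw [inner_sum2 K hK (a*H) hm1, mul_add]
  rw [Finset.sum_congr rfl hstep2, Finset.sum_add_distrib] at hstep1
  -- step 3: the ite-sum contributes only at a = K
  have hstep3 : ∑ a ∈ range (2*K),
      ((a:ℝ) * (-1:ℝ)^a) * (if (K:ℤ) ∣ ((a*H:ℕ):ℤ) then (K:ℝ) * (-1:ℝ)^(((a*H:ℕ):ℤ)/(K:ℤ)) else 0)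
      = -((K:ℝ))^2 := by
    rw [Finset.sum_eq_single_of_mem K (by rw [Finset.mem_range]; omega)]
    · have hdvd : (K:ℤ) ∣ ((K*H:ℕ):ℤ) := by push_cast; exact Dvd.intro H rfl
      rw [if_pos hdvd]
      have he : ((K*H:ℕ):ℤ)/(K:ℤ) = (H:ℤ) := by
        push_cast
        exact Int.mul_ediv_cancel_left _ hKZne
      rw [he]
      have hsgn : ((-1:ℝ))^K * (-1:ℝ)^((H:ℤ)) = -1 := by
        rw [neg_one_npow_zpow]
        rw [neg_one_zpow_congr' (a := (K:ℤ)+H) (b := 1) (by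
          obtain ⟨c, hc⟩ := hoddKH
          exact ⟨c, by omega⟩)]
        norm_num
      calc ((K:ℝ) * (-1:ℝ)^K) * ((K:ℝ) * (-1:ℝ)^((H:ℤ)))
          = (K:ℝ)^2 * (((-1:ℝ))^K * (-1:ℝ)^((H:ℤ))) := by ring
        _ = -((K:ℝ))^2 := by rw [hsgn]; ring
    · intro b hb hbne
      rcases Nat.eq_zero_or_pos b with rfl | hbpos
      · norm_num
      · have hnd : ¬ ((K:ℤ) ∣ ((b*H:ℕ):ℤ)) := by
          intro hcon
          obtain ⟨t, rfl⟩ := hdvd_b b hcon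
          rw [Finset.mem_range] at hb
          have ht0 : t ≠ 0 := by rintro rfl; omega
          have ht1 : t ≠ 1 := by rintro rfl; omega
          have ht2 : 2 ≤ t := by omega
          have : 2*K ≤ K*t := by nlinarith
          omega
        rw [if_neg hnd, mul_zero]
  -- step 4: the main alternating sum
  have hsgnKH : ((-1:ℝ))^K * (-1:ℝ)^((H:ℤ)) = -1 := by
    rw [neg_one_npow_zpow]
    rw [neg_one_zpow_congr' (a := (K:ℤ)+H) (b := 1) (by
      obtain ⟨c, hc⟩ := hoddKH
      exact ⟨c, by omega⟩)]
    norm_num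
  have hstep4 : ∑ a ∈ range (2*K),
      ((a:ℝ) * (-1:ℝ)^a) * ((K:ℝ) * (-1:ℝ)^((((a*H:ℕ):ℤ)-1)/(K:ℤ)))
      = (K:ℝ)^2 - (K:ℝ)^2 * ∑ a ∈ Finset.Ico 1 K, (-1:ℝ)^((a:ℤ) + (h*a)/(K:ℤ)) := by
    rw [show 2*K = K + K by ring, Finset.sum_range_add, ← Finset.sum_add_distrib,
      Finset.range_eq_Ico, Finset.sum_eq_sum_Ico_succ_bot hK]
    have hzero : ((0:ℕ):ℝ) * (-1:ℝ)^(0:ℕ) * ((K:ℝ) * (-1:ℝ)^((((0*H:ℕ):ℤ)-1)/(K:ℤ)))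
        + ((K+0:ℕ):ℝ) * (-1:ℝ)^(K+0:ℕ) * ((K:ℝ) * (-1:ℝ)^(((((K+0)*H:ℕ):ℤ)-1)/(K:ℤ)))
        = (K:ℝ)^2 := by
      have hdvd : (K:ℤ) ∣ (((K+0)*H:ℕ):ℤ) := by push_cast; exact ⟨(H:ℤ), by ring⟩
      have e1 : (((((K+0)*H:ℕ):ℤ))-1)/(K:ℤ) = (H:ℤ) - 1 := by
        rw [ediv_sub_one_dvd hKZ hdvd]
        congr 1
        have h9 : (((K+0)*H:ℕ):ℤ) = (K:ℤ)*(H:ℤ) := by push_cast; ring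
        rw [h9, Int.mul_ediv_cancel_left _ hKZne]
      rw [e1]
      have e2 : (-1:ℝ)^((H:ℤ)-1) = -(-1:ℝ)^((H:ℤ)) := by
        rw [zpow_sub₀ (by norm_num : (-1:ℝ) ≠ 0)]
        norm_num
        ring
      rw [e2]
      simp only [Nat.add_zero, Nat.cast_zero, pow_zero, Nat.cast_add]
      push_cast
      linear_combination (-(K:ℝ)^2) * hsgnKH
    have hmain : ∀ a ∈ Finset.Ico 1 K,
        ((a:ℝ) * (-1:ℝ)^a) * ((K:ℝ) * (-1:ℝ)^((((a*H:ℕ):ℤ)-1)/(K:ℤ)))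
          + (((K+a:ℕ):ℝ) * (-1:ℝ)^(K+a:ℕ)) * ((K:ℝ) * (-1:ℝ)^(((((K+a)*H:ℕ):ℤ)-1)/(K:ℤ)))
          = -(K:ℝ)^2 * (-1:ℝ)^((a:ℤ) + (h*a)/(K:ℤ)) := by
      intro a ha
      rw [Finset.mem_Ico] at ha
      have hnd : ¬ ((K:ℤ) ∣ ((a*H:ℕ):ℤ)) := by
        intro hcon
        obtain ⟨t, rfl⟩ := hdvd_b a hcon
        have ht0 : t ≠ 0 := by rintro rfl; omega
        have : K ≤ K*t := Nat.le_mul_of_pos_right K (by omega)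
        omega
      set q : ℤ := ((a*H:ℕ):ℤ)/(K:ℤ) with hq
      have e1 : (((a*H:ℕ):ℤ)-1)/(K:ℤ) = q := ediv_sub_one_not_dvd hKZ hnd
      have e2 : ((((K+a)*H:ℕ):ℤ)-1)/(K:ℤ) = q + H := by
        have : (((K+a)*H:ℕ):ℤ) - 1 = (((a*H:ℕ):ℤ) - 1) + (H:ℤ)*(K:ℤ) := by push_cast; ring
        rw [this, Int.add_mul_ediv_right _ _ hKZne, e1]
      have e3 : (-1:ℝ)^(K+a:ℕ) = (-1:ℝ)^K * (-1:ℝ)^a := pow_add _ _ _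
      have e4 : (-1:ℝ)^(q + (H:ℤ)) = (-1:ℝ)^q * (-1:ℝ)^((H:ℤ)) :=
        zpow_add₀ (by norm_num : (-1:ℝ) ≠ 0) _ _
      have e5 : (-1:ℝ)^((a:ℤ) + (h*(a:ℤ))/(K:ℤ)) = (-1:ℝ)^a * (-1:ℝ)^q := by
        rw [← neg_one_npow_zpow]
        congr 2
        rw [hq]
        congr 1
        push_cast [hH]
        ring
      rw [e1, e2, e3, e4, e5]
      push_cast
      linear_combination (((K:ℝ)+a)*(K:ℝ)*((-1:ℝ))^a*((-1:ℝ))^q) * hsgnKH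
    rw [Finset.sum_congr rfl hmain, hzero, ← Finset.mul_sum]
    ring
  have hfinal : (K:ℝ) * (∑ i ∈ range K,
      Real.tan (π * h * (2*(i:ℝ)+1) / (2*K)) * Real.cot (π * (2*(i:ℝ)+1) / (2*K)))
      = (K:ℝ) * (-(K:ℝ) * ∑ a ∈ Finset.Ico 1 K, (-1:ℝ)^((a:ℤ) + (h*a)/(K:ℤ))) := by
    rw [hstep1, hstep3, hstep4]
    ring
  exact mul_left_cancel₀ hKR hfinal



lemma sum_Icc_int_eq_range (K : ℕ) (F : ℤ → ℝ) :
    ∑ j ∈ Finset.Icc (1:ℤ) (K:ℤ), F j = ∑ i ∈ range K, F ((i:ℤ)+1) := by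
  apply Finset.sum_nbij' (i := fun j : ℤ => (j-1).toNat) (j := fun i : ℕ => (i:ℤ)+1)
  · intro a ha; rw [Finset.mem_Icc] at ha; rw [Finset.mem_range]; omega
  · intro a ha; rw [Finset.mem_range] at ha; rw [Finset.mem_Icc]; omega
  · intro a ha; rw [Finset.mem_Icc] at ha; omega
  · intro a ha; rw [Finset.mem_range] at ha; omega
  · intro a ha; rw [Finset.mem_Icc] at ha; congr 1; omega

lemma B1eq (h k : ℤ) (hh : 0 < h) (hk : 0 < k) (hco : IsCoprime h k)
    (hodd : Odd (h + k)) :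
    2 * B1 h k = ((h:ℝ) - 1) * ∑ a ∈ Finset.Ico 1 k.toNat,
      (-1:ℝ)^((a:ℤ) + (h*a)/k) := by
  have hKk : ((k.toNat:ℕ):ℤ) = k := Int.toNat_of_nonneg hk.le
  set K : ℕ := k.toNat with hKdef
  have hK : 0 < K := by omega
  have hnd : ∀ a : ℤ, 0 < a → a < k → ¬ (k ∣ h * a) := by
    intro a ha0 hak hdvd
    have h2 : k ∣ a := hco.symm.dvd_of_dvd_mul_left hdvd
    have := Int.le_of_dvd ha0 h2
    omega
  -- B1 written with ediv over Ico 1 K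
  have hB1 : B1 h k = ∑ a ∈ Finset.Ico 1 K,
      (-1:ℝ)^((a:ℤ) + (h*a)/k) * (((h*(a:ℤ))/k : ℤ):ℝ) := by
    rw [B1]
    have hkm1 : ((K-1:ℕ):ℤ) = k - 1 := by omega
    rw [← hkm1, sum_Icc_int_eq_range (K-1)
      (fun j => (-1 : ℝ) ^ (j + ⌊((h * j : ℤ) : ℝ) / (k : ℝ)⌋) * (⌊((h * j : ℤ) : ℝ) / (k : ℝ)⌋ : ℝ)),
      Finset.sum_Ico_eq_sum_range]
    apply Finset.sum_congr rfl
    intro i _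
    have hc : ((1+i:ℕ):ℤ) = (i:ℤ)+1 := by omega
    rw [hc]
    have hfl : ⌊((h * ((i:ℤ)+1) : ℤ) : ℝ) / (k : ℝ)⌋ = (h*((i:ℤ)+1))/k := by
      have := floor_int_div (h*((i:ℤ)+1)) k hk
      exact_mod_cast this
    rw [hfl]
  -- reflection
  have hrefl : (∑ a ∈ Finset.Ico 1 K, (-1:ℝ)^((a:ℤ) + (h*a)/k) * (((h*(a:ℤ))/k : ℤ):ℝ))
      = ∑ a ∈ Finset.Ico 1 K,
          (-1:ℝ)^((a:ℤ) + (h*a)/k) * (((h:ℝ) - 1) - (((h*(a:ℤ))/k : ℤ):ℝ)) := by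
    apply Finset.sum_nbij' (i := fun a : ℕ => K - a) (j := fun a : ℕ => K - a)
    · intro a ha; rw [Finset.mem_Ico] at ha ⊢; omega
    · intro a ha; rw [Finset.mem_Ico] at ha ⊢; omega
    · intro a ha; rw [Finset.mem_Ico] at ha; omega
    · intro a ha; rw [Finset.mem_Ico] at ha; omega
    · intro a ha
      rw [Finset.mem_Ico] at ha
      have hcast : ((K - a:ℕ):ℤ) = k - a := by omega
      have hnda : ¬ (k ∣ h * a) := by
        apply hnd a (by exact_mod_cast ha.1)
        have : (a:ℤ) < K := by exact_mod_cast ha.2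
        omega
      have hq : h * ((K - a:ℕ):ℤ) / k = h - 1 - h * (a:ℤ) / k := by
        rw [hcast]
        have e1 : h * ((k:ℤ) - a) = (-(h*a)) + h * k := by ring
        rw [e1, Int.add_mul_ediv_right _ _ hk.ne', ediv_neg_not_dvd hk hnda]
        ring
      have hsgn : (-1:ℝ)^((((K - a:ℕ)):ℤ) + (h - 1 - h * (a:ℤ) / k))
          = (-1:ℝ)^((a:ℤ) + h * (a:ℤ) / k) := by
        apply neg_one_zpow_congr'
        rw [hcast]
        obtain ⟨c, hc⟩ := hodd
        exact ⟨(c - a - h * (a:ℤ) / k), by omega⟩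
      rw [hq, hsgn]
      push_cast
      ring
  rw [hB1, two_mul]
  nth_rewrite 2 [hrefl]
  rw [← Finset.sum_add_distrib, Finset.mul_sum]
  exact Finset.sum_congr rfl fun a _ => by ring

theorem stmt_12 (h k : ℤ) (hh : 0 < h) (hk : 0 < k) (hco : IsCoprime h k)
    (hodd : Odd (h + k)) :
    B1 h k = ((1 - (h : ℝ)) / (2 * (k : ℝ)))
      * ∑ j ∈ Finset.Icc (1 : ℤ) k,
          Real.tan (π * (h : ℝ) * (2 * (j : ℝ) - 1) / (2 * (k : ℝ)))
            * Real.cot (π * (2 * (j : ℝ) - 1) / (2 * (k : ℝ))) := by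
  have hKk : ((k.toNat:ℕ):ℤ) = k := Int.toNat_of_nonneg hk.le
  set K : ℕ := k.toNat with hKdef
  have hK : 0 < K := by omega
  have hKR : ((K:ℕ):ℝ) = (k:ℝ) := by exact_mod_cast congrArg (Int.cast : ℤ → ℝ) hKk
  have hkR : (k:ℝ) ≠ 0 := Int.cast_ne_zero.mpr hk.ne'
  have hco' : IsCoprime h ((K:ℕ):ℤ) := by rw [hKk]; exact hco
  have hodd' : Odd (h + ((K:ℕ):ℤ)) := by rw [hKk]; exact hodd
  have hS := Ssum h hh K hK hco' hodd'
  rw [hKR, hKk] at hS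
  have hIcc : ∑ j ∈ Finset.Icc (1 : ℤ) k,
      Real.tan (π * (h : ℝ) * (2 * (j : ℝ) - 1) / (2 * (k : ℝ)))
        * Real.cot (π * (2 * (j : ℝ) - 1) / (2 * (k : ℝ)))
      = ∑ i ∈ range K,
          Real.tan (π * h * (2*(i:ℝ)+1) / (2*(k:ℝ))) * Real.cot (π * (2*(i:ℝ)+1) / (2*(k:ℝ))) := by
    rw [show (Finset.Icc (1:ℤ) k) = Finset.Icc (1:ℤ) ((K:ℕ):ℤ) by rw [hKk],
      sum_Icc_int_eq_range K (fun j => Real.tan (π * (h : ℝ) * (2 * (j : ℝ) - 1) / (2 * (k : ℝ)))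
        * Real.cot (π * (2 * (j : ℝ) - 1) / (2 * (k : ℝ))))]
    apply Finset.sum_congr rfl
    intro i _
    have e1 : 2 * (((i:ℤ)+1 : ℤ):ℝ) - 1 = 2*(i:ℝ)+1 := by push_cast; ring
    simp only [e1]
  have hB := B1eq h k hh hk hco hodd
  rw [hIcc, hS]
  have e2 : ((1 - (h:ℝ)) / (2 * (k:ℝ))) * (-(k:ℝ) * ∑ a ∈ Finset.Ico 1 K, (-1:ℝ)^((a:ℤ) + (h*a)/k))
      = (((h:ℝ) - 1) * ∑ a ∈ Finset.Ico 1 K, (-1:ℝ)^((a:ℤ) + (h*a)/k)) / 2 := by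
    field_simp
    ring
  rw [e2]
  rw [← hB]
  ring
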